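/- Let 𝒜 be a set. Consider the functor κ : fSets^op → Set sending a finite nonempty set I to the set of functions I → 𝒜, which sends a surjection φ : I → J to the precomposition map Map(J, 𝒜) → Map(I, 𝒜). Then the colimit of κ in Set is in natural bijection with the set of finite nonempty subsets of 𝒜, the bijection sending the class of f : I → 𝒜 to its image f(I). -/

import Mathlib

open CategoryTheory Function Limits

/-- An object of `fSets`: a finite nonempty set. -/
structure FSet : Type 1 where
  I : Type
  iFin : Finite I
  iNe : Nonempty I

structure FSurj (X Y : FSet) : Type where
  τ : X.I → Y.I
  hτ : Function.Surjective τ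

theorem FSurj.ext' {X Y : FSet} : ∀ {f g : FSurj X Y}, f.τ = g.τ → f = g
  | ⟨_, _⟩, ⟨_, _⟩, rfl => rfl

instance : Category FSet where
  Hom := FSurj
  id X := ⟨_root_.id, Function.surjective_id⟩
  comp := fun f g => ⟨g.τ ∘ f.τ, g.hτ.comp f.hτ⟩
  id_comp := fun f => FSurj.ext' rfl
  comp_id := fun f => FSurj.ext' rfl
  assoc := fun f g h => FSurj.ext' rfl

/-- The functor `κ : fSets^op → Set`, `I ↦ Map(I, 𝒜)`, with transition maps given by
precomposition with the surjections. -/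
def kappa (𝒜 : Type) : FSetᵒᵖ ⥤ Type where
  obj X := X.unop.I → 𝒜
  map h := TypeCat.ofHom fun f => f ∘ h.unop.τ
  map_id _ := rfl
  map_comp _ _ := rfl

/-- The cocone over `κ` whose apex is the set of finite nonempty subsets of `𝒜`, with
components sending `f : I → 𝒜` to its image `f(I)`. -/
def iotaCocone (𝒜 : Type) : Limits.Cocone (kappa 𝒜) where
  pt := {S : Set 𝒜 // S.Finite ∧ S.Nonempty}
  ι :=
    { app := fun X => TypeCat.ofHom fun f => ⟨Set.range f,
        (by have := X.unop.iFin; exact Set.finite_range f),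
        (by have := X.unop.iNe; exact Set.range_nonempty f)⟩
      naturality := by
        intro X Y h
        ext f
        refine Subtype.ext ?_
        exact h.unop.hτ.range_comp f }

/-- The finite nonempty subset `S` of `𝒜` as an object of `FSet`. -/
def FSet.ofSubset {𝒜 : Type} (S : {S : Set 𝒜 // S.Finite ∧ S.Nonempty}) : FSet :=
  ⟨S.1, S.2.1.to_subtype, S.2.2.to_subtype⟩

/-- The colimit over `fSets^op` of `I ↦ Map(I, 𝒜)` is the set of finite nonempty
subsets of `𝒜`, via `f ↦ f(I)`. -/
theorem stmt13 (𝒜 : Type) : Nonempty (Limits.IsColimit (iotaCocone 𝒜)) := by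
  constructor
  refine
    { desc := fun s => TypeCat.ofHom fun S => s.ι.app (Opposite.op (FSet.ofSubset S)) Subtype.val
      fac := ?_
      uniq := ?_ }
  · intro s X
    ext f
    have hsurj : Function.Surjective (Set.rangeFactorization f) :=
      Set.rangeFactorization_surjective
    have := ConcreteCategory.congr_hom (s.ι.naturality
      (Quiver.Hom.op (⟨Set.rangeFactorization f, hsurj⟩ :
        FSurj X.unop (FSet.ofSubset ⟨Set.range f,
          (by have := X.unop.iFin; exact Set.finite_range f),
          (by have := X.unop.iNe; exact Set.range_nonempty f)⟩)))) Subtype.val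
    simp only [kappa, Functor.const_obj_map, types_comp_apply, types_id_apply] at this
    exact this.symm
  · intro s m hm
    ext S
    have := ConcreteCategory.congr_hom (hm (Opposite.op (FSet.ofSubset S))) Subtype.val
    simp only [iotaCocone, types_comp_apply] at this
    show _ = (s.ι.app (Opposite.op (FSet.ofSubset S))) Subtype.val
    rw [← this]
    exact congrArg m (Subtype.ext Subtype.range_coe.symm)
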